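/- Let K ≥ 2, σ > 0, and let λ : {1,…,K} → ℝ have a unique maximizer a⋆. For a ≠ a⋆ set Δ_a = λ_{a⋆} − λ_a, set Δ_{a⋆} = 0, and let Δ_{b⋆} = min_{a ≠ a⋆} Δ_a. Define H = Σ_{a=1}^K 2σ² / (max{Δ_a, Δ_{b⋆}})². Then for every probability vector w = (w_1,…,w_K) (w_a ≥ 0, Σ_a w_a = 1), the infimum over all ζ : {1,…,K} → ℝ such that a⋆ is not a maximizer of ζ (i.e., there exists b ≠ a⋆ with ζ_b > ζ_{a⋆}) of Σ_{a=1}^K w_a (λ_a − ζ_a)² / (2σ²) is at most H^{-1}. Equivalently, the Gaussian characteristic time T⋆(λ) = [sup_w inf_ζ Σ_a w_a (λ_a − ζ_a)²/(2σ²)]^{-1} satisfies T⋆(λ) ≥ H. -/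

import Mathlib

open Finset

lemma aux_div_le_left (x y : ℝ) (hx : 0 ≤ x) (hy : 0 ≤ y) :
    x * y / (x + y) ≤ x := by
  rcases eq_or_lt_of_le (by linarith : (0:ℝ) ≤ x + y) with h | h
  · rw [← h]; simpa using hx
  · rw [div_le_iff₀ h]; nlinarith

lemma aux_div_le_right (x y : ℝ) (hx : 0 ≤ x) (hy : 0 ≤ y) :
    x * y / (x + y) ≤ y := by
  have := aux_div_le_left y x hy hx
  rw [mul_comm y x, add_comm y x] at this
  exact this

theorem characteristic_time_lower_bound
    (K : ℕ) (hK : 2 ≤ K) (σ : ℝ) (hσ : 0 < σ)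
    (lam : Fin K → ℝ) (astar : Fin K)
    (hbest : ∀ a : Fin K, a ≠ astar → lam a < lam astar)
    (Δ : Fin K → ℝ)
    (hΔ : ∀ a : Fin K, Δ a = if a = astar then 0 else lam astar - lam a)
    (Δb : ℝ)
    (hΔb_le : ∀ a : Fin K, a ≠ astar → Δb ≤ Δ a)
    (hΔb_mem : ∃ a : Fin K, a ≠ astar ∧ Δb = Δ a)
    (H : ℝ) (hH : H = ∑ a : Fin K, 2 * σ ^ 2 / (max (Δ a) Δb) ^ 2)
    (w : Fin K → ℝ) (hw0 : ∀ a : Fin K, 0 ≤ w a) (hw1 : ∑ a : Fin K, w a = 1) :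
    sInf {v : ℝ | ∃ ζ : Fin K → ℝ, (∃ b : Fin K, b ≠ astar ∧ ζ astar < ζ b) ∧
        v = ∑ a : Fin K, w a * (lam a - ζ a) ^ 2 / (2 * σ ^ 2)} ≤ H⁻¹ := by
  haveI : NeZero K := ⟨by omega⟩
  have hσ2 : (0:ℝ) < 2 * σ ^ 2 := by positivity
  have hΔpos : ∀ a : Fin K, a ≠ astar → 0 < Δ a := by
    intro a ha
    rw [hΔ a, if_neg ha]
    linarith [hbest a ha]
  have hΔbpos : 0 < Δb := by
    obtain ⟨b0, hb0, hb0e⟩ := hΔb_mem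
    rw [hb0e]; exact hΔpos b0 hb0
  have hΔastar : Δ astar = 0 := by rw [hΔ astar, if_pos rfl]
  have hmax : ∀ a : Fin K, max (Δ a) Δb = if a = astar then Δb else Δ a := by
    intro a
    by_cases ha : a = astar
    · rw [if_pos ha, ha, hΔastar, max_eq_right hΔbpos.le]
    · rw [if_neg ha, max_eq_left (hΔb_le a ha)]
  have hHpos : 0 < H := by
    rw [hH]
    apply Finset.sum_pos
    · intro a _
      have : 0 < max (Δ a) Δb := lt_max_of_lt_right hΔbpos
      positivity
    · exact Finset.univ_nonempty
  have hw_le : ∀ a : Fin K, w a ≤ 1 := by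
    intro a
    rw [← hw1]
    exact Finset.single_le_sum (fun i _ => hw0 i) (Finset.mem_univ a)
  -- the candidate infimum value for arm b
  have hkey : ∃ b : Fin K, b ≠ astar ∧
      w astar * w b / (w astar + w b) * Δ b ^ 2 / (2 * σ ^ 2) ≤ H⁻¹ := by
    by_contra hcon
    push_neg at hcon
    have hlt : ∀ a : Fin K, H⁻¹ * (2 * σ ^ 2 / (max (Δ a) Δb) ^ 2) < w a := by
      intro a
      by_cases ha : a = astar
      · subst ha
        obtain ⟨b0, hb0, hb0e⟩ := hΔb_mem
        have h1 := hcon b0 hb0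
        have h2 : w a * w b0 / (w a + w b0) * Δ b0 ^ 2 / (2 * σ ^ 2)
            ≤ w a * Δ b0 ^ 2 / (2 * σ ^ 2) := by
          have := aux_div_le_left (w a) (w b0) (hw0 a) (hw0 b0)
          have hD2 : (0:ℝ) ≤ Δ b0 ^ 2 := sq_nonneg _
          gcongr
        have h3 : H⁻¹ < w a * Δ b0 ^ 2 / (2 * σ ^ 2) := lt_of_lt_of_le h1 h2
        rw [← hb0e] at h3
        rw [lt_div_iff₀ hσ2] at h3
        have hD2 : (0:ℝ) < Δb ^ 2 := by positivity
        rw [hmax a, if_pos rfl, ← mul_div_assoc, div_lt_iff₀ hD2]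
        exact h3
      · have h1 := hcon a ha
        have h2 : w astar * w a / (w astar + w a) * Δ a ^ 2 / (2 * σ ^ 2)
            ≤ w a * Δ a ^ 2 / (2 * σ ^ 2) := by
          have := aux_div_le_right (w astar) (w a) (hw0 astar) (hw0 a)
          have hD2 : (0:ℝ) ≤ Δ a ^ 2 := sq_nonneg _
          gcongr
        have h3 : H⁻¹ < w a * Δ a ^ 2 / (2 * σ ^ 2) := lt_of_lt_of_le h1 h2
        rw [lt_div_iff₀ hσ2] at h3
        have hDa := hΔpos a ha
        have hD2 : (0:ℝ) < Δ a ^ 2 := by positivity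
        rw [hmax a, if_neg ha, ← mul_div_assoc, div_lt_iff₀ hD2]
        exact h3
    have hsum := Finset.sum_lt_sum_of_nonempty (Finset.univ_nonempty)
      (fun i (_ : i ∈ Finset.univ) => hlt i)
    rw [hw1, ← Finset.mul_sum, ← hH, inv_mul_cancel₀ hHpos.ne'] at hsum
    exact lt_irrefl 1 hsum
  obtain ⟨b, hb, hfb⟩ := hkey
  have hbdd : BddBelow {v : ℝ | ∃ ζ : Fin K → ℝ, (∃ b : Fin K, b ≠ astar ∧ ζ astar < ζ b) ∧
      v = ∑ a : Fin K, w a * (lam a - ζ a) ^ 2 / (2 * σ ^ 2)} := by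
    refine ⟨0, ?_⟩
    rintro v ⟨ζ, _, rfl⟩
    apply Finset.sum_nonneg
    intro a _
    have := hw0 a
    positivity
  have hDb : 0 < Δ b := hΔpos b hb
  have hΔbv : Δ b = lam astar - lam b := by rw [hΔ b, if_neg hb]
  have hA0 : 0 ≤ w astar := hw0 astar
  have hB0 : 0 ≤ w b := hw0 b
  have hB1 : w b ≤ 1 := hw_le b
  -- show sInf ≤ (candidate value) + ε for all ε > 0
  have hstep : ∀ ε : ℝ, 0 < ε →
      sInf {v : ℝ | ∃ ζ : Fin K → ℝ, (∃ b : Fin K, b ≠ astar ∧ ζ astar < ζ b) ∧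
        v = ∑ a : Fin K, w a * (lam a - ζ a) ^ 2 / (2 * σ ^ 2)}
      ≤ w astar * w b / (w astar + w b) * Δ b ^ 2 / (2 * σ ^ 2) + ε := by
    intro ε hε
    rcases eq_or_lt_of_le (by linarith : (0:ℝ) ≤ w astar + w b) with hs | hs
    · -- w astar = w b = 0 : the value 0 is attained
      have hwb0 : w b = 0 := by linarith
      set ζ : Fin K → ℝ := fun a => if a = b then lam astar + 1 else lam a with hζ
      have e1 : ζ astar = lam astar := by
        rw [hζ]; exact if_neg (Ne.symm hb)
      have e2 : ζ b = lam astar + 1 := by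
        rw [hζ]; exact if_pos rfl
      have hmem : (0:ℝ) ∈ {v : ℝ | ∃ ζ : Fin K → ℝ,
          (∃ b : Fin K, b ≠ astar ∧ ζ astar < ζ b) ∧
          v = ∑ a : Fin K, w a * (lam a - ζ a) ^ 2 / (2 * σ ^ 2)} := by
        refine ⟨ζ, ⟨b, hb, by rw [e1, e2]; linarith⟩, ?_⟩
        symm
        apply Finset.sum_eq_zero
        intro a _
        by_cases hab : a = b
        · rw [hab, hwb0]; ring
        · have : ζ a = lam a := by rw [hζ]; exact if_neg hab
          rw [this]; ring
      have hnn : 0 ≤ w astar * w b / (w astar + w b) * Δ b ^ 2 / (2 * σ ^ 2) + ε := by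
        have h1 : w astar * w b / (w astar + w b) = 0 := by
          rw [← hs, div_zero]
        rw [h1]
        have : (0:ℝ) * Δ b ^ 2 / (2 * σ ^ 2) = 0 := by ring
        rw [this]
        linarith
      exact le_trans (csInf_le hbdd hmem) hnn
    · -- w astar + w b > 0
      set t : ℝ := w b / (w astar + w b) with ht
      have ht0 : 0 ≤ t := div_nonneg hB0 hs.le
      have ht1 : t ≤ 1 := by
        rw [ht, div_le_one hs]; linarith
      set δ : ℝ := min 1 (ε * (2 * σ ^ 2) / (2 * Δ b + 1)) with hδ
      have hδpos : 0 < δ := by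
        apply lt_min one_pos
        positivity
      have hδ1 : δ ≤ 1 := min_le_left _ _
      have hδ2 : δ * (2 * Δ b + 1) ≤ ε * (2 * σ ^ 2) := by
        have h := min_le_right 1 (ε * (2 * σ ^ 2) / (2 * Δ b + 1))
        rw [← hδ, le_div_iff₀ (by linarith : (0:ℝ) < 2 * Δ b + 1)] at h
        exact h
      set ζ : Fin K → ℝ := fun a =>
        if a = astar then lam astar - t * Δ b
        else if a = b then lam b + (1 - t) * Δ b + δ else lam a with hζ
      have hζa : ζ astar = lam astar - t * Δ b := by rw [hζ]; exact if_pos rfl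
      have hζb : ζ b = lam b + (1 - t) * Δ b + δ := by
        rw [hζ]; exact (if_neg hb).trans (if_pos rfl)
      have hlt : ζ astar < ζ b := by
        rw [hζa, hζb]
        nlinarith [hΔbv, hδpos, mul_nonneg ht0 hDb.le]
      have hmem : (w astar * (t * Δ b) ^ 2 / (2 * σ ^ 2)
            + w b * ((1 - t) * Δ b + δ) ^ 2 / (2 * σ ^ 2))
          ∈ {v : ℝ | ∃ ζ : Fin K → ℝ,
          (∃ b : Fin K, b ≠ astar ∧ ζ astar < ζ b) ∧
          v = ∑ a : Fin K, w a * (lam a - ζ a) ^ 2 / (2 * σ ^ 2)} := by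
        refine ⟨ζ, ⟨b, hb, hlt⟩, ?_⟩
        have hsub : ∑ a : Fin K, w a * (lam a - ζ a) ^ 2 / (2 * σ ^ 2)
            = ∑ a ∈ ({astar, b} : Finset (Fin K)),
                w a * (lam a - ζ a) ^ 2 / (2 * σ ^ 2) := by
          symm
          apply Finset.sum_subset (Finset.subset_univ _)
          intro x _ hx
          simp only [Finset.mem_insert, Finset.mem_singleton, not_or] at hx
          have : ζ x = lam x := by
            rw [hζ]; exact (if_neg hx.1).trans (if_neg hx.2)
          rw [this]; ring
        rw [hsub, Finset.sum_pair (Ne.symm hb : astar ≠ b), hζa, hζb]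
        ring
      refine le_trans (csInf_le hbdd hmem) ?_
      -- the arithmetic bound
      have key2 : w astar * w b / (w astar + w b) * Δ b ^ 2
          = (w astar * t ^ 2 + w b * (1 - t) ^ 2) * Δ b ^ 2 := by
        have key : w astar * t ^ 2 + w b * (1 - t) ^ 2 = w astar * w b / (w astar + w b) := by
          rw [ht]
          field_simp
          ring
        rw [key]
      have hBt : w b * (1 - t) ≤ 1 :=
        mul_le_one₀ hB1 (by linarith) (by linarith)
      have b1 : w b * (2 * (1 - t) * Δ b * δ) ≤ 2 * Δ b * δ := by
        have h2Dδ : 0 ≤ 2 * Δ b * δ := by positivity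
        calc w b * (2 * (1 - t) * Δ b * δ) = 2 * Δ b * δ * (w b * (1 - t)) := by ring
          _ ≤ 2 * Δ b * δ * 1 := mul_le_mul_of_nonneg_left hBt h2Dδ
          _ = 2 * Δ b * δ := by ring
      have b2 : w b * δ ^ 2 ≤ δ := by
        calc w b * δ ^ 2 ≤ 1 * δ ^ 2 :=
              mul_le_mul_of_nonneg_right hB1 (sq_nonneg δ)
          _ = δ * δ := by ring
          _ ≤ 1 * δ := mul_le_mul_of_nonneg_right hδ1 hδpos.le
          _ = δ := by ring
      have bound : w b * (2 * (1 - t) * Δ b * δ + δ ^ 2) ≤ ε * (2 * σ ^ 2) := by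
        have eq1 : w b * (2 * (1 - t) * Δ b * δ + δ ^ 2)
            = w b * (2 * (1 - t) * Δ b * δ) + w b * δ ^ 2 := by ring
        have eq2 : δ * (2 * Δ b + 1) = 2 * Δ b * δ + δ := by ring
        linarith [b1, b2, hδ2]
      have expand : w astar * (t * Δ b) ^ 2 + w b * ((1 - t) * Δ b + δ) ^ 2
          = (w astar * t ^ 2 + w b * (1 - t) ^ 2) * Δ b ^ 2
            + w b * (2 * (1 - t) * Δ b * δ + δ ^ 2) := by ring
      have goal2 : w astar * (t * Δ b) ^ 2 + w b * ((1 - t) * Δ b + δ) ^ 2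
          ≤ w astar * w b / (w astar + w b) * Δ b ^ 2 + ε * (2 * σ ^ 2) := by
        rw [key2]
        linarith [bound, expand]
      calc w astar * (t * Δ b) ^ 2 / (2 * σ ^ 2) + w b * ((1 - t) * Δ b + δ) ^ 2 / (2 * σ ^ 2)
          = (w astar * (t * Δ b) ^ 2 + w b * ((1 - t) * Δ b + δ) ^ 2) / (2 * σ ^ 2) := by ring
        _ ≤ (w astar * w b / (w astar + w b) * Δ b ^ 2 + ε * (2 * σ ^ 2)) / (2 * σ ^ 2) := by
            gcongr
        _ = w astar * w b / (w astar + w b) * Δ b ^ 2 / (2 * σ ^ 2) + ε := by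
            field_simp
  exact le_trans (le_of_forall_pos_le_add hstep) hfb
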